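/- Under the standing setup, the first standard basis vector satisfies: v_1 = 2e_0 − e_1 if k_1 > 1, and v_1 = e_0 − e_1 if k_1 = 1. Moreover, if x_0 = e_0 − e_{k_1} − e_{k_2} + e_{k_3}, then necessarily v_1 = 2e_0 − e_1 (so k_1 > 1). -/

import Mathlib

namespace Prism

/-- Gram matrix of a C-type lattice with parameters `a 1, …, a n` (vertices `x_0, …, x_n`). -/
def CGram (n : ℕ) (a : ℕ → ℤ) : Fin (n + 1) → Fin (n + 1) → ℤ := fun i j =>
  if (i : ℕ) = (j : ℕ) then (if (i : ℕ) = 0 then 4 else a (i : ℕ))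
  else if ((i : ℕ) = 0 ∧ (j : ℕ) = 1) ∨ ((i : ℕ) = 1 ∧ (j : ℕ) = 0) then -2
  else if (i : ℕ) + 1 = (j : ℕ) ∨ (j : ℕ) + 1 = (i : ℕ) then -1
  else 0

/-- The symmetric bilinear form of a C-type lattice. -/
def CForm (n : ℕ) (a : ℕ → ℤ) (v w : Fin (n + 1) → ℤ) : ℤ :=
  ∑ i : Fin (n + 1), ∑ j : Fin (n + 1), v i * CGram n a i j * w j

/-- Conditions on the parameters of a C-type lattice: `n ≥ 1`, all `a_i ≥ 2`, `a_1 ≥ 3`. -/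
def CTypeParams (n : ℕ) (a : ℕ → ℤ) : Prop :=
  1 ≤ n ∧ (∀ i, 1 ≤ i → i ≤ n → 2 ≤ a i) ∧ 3 ≤ a 1

/-- Numerator/denominator pair of the Hirzebruch–Jung continued fraction `[a_1, …, a_k]⁻`. -/
def hjPair : List ℤ → ℤ × ℤ
  | [] => (1, 0)
  | x :: l => (x * (hjPair l).1 - (hjPair l).2, (hjPair l).1)

/-- `a 1, …, a n` are the coefficients of the HJ expansion of `(2q-p)/(q-p)`, all `≥ 2`
(`a_1 ≥ 3` being forced since `q > p`); i.e. the data defining the lattice `C(p,q)`. -/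
def IsCpq (p q : ℤ) (n : ℕ) (a : ℕ → ℤ) : Prop :=
  CTypeParams n a ∧ hjPair ((List.range' 1 n).map fun i => a i) = (2 * q - p, q - p)

/-- Standard dot product on `ℤ^m`. -/
def dotF {m : ℕ} (v w : Fin m → ℤ) : ℤ := ∑ i, v i * w i

/-- Orthogonal complement of `σ` in `ℤ^m`. -/
def perp {m : ℕ} (σ : Fin m → ℤ) : Submodule ℤ (Fin m → ℤ) where
  carrier := {v | dotF v σ = 0}
  add_mem' := by
    intro a b ha hb
    simp only [Set.mem_setOf_eq, dotF, Pi.add_apply, add_mul, Finset.sum_add_distrib] at *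
    omega
  zero_mem' := by simp [dotF]
  smul_mem' := by
    intro c v hv
    simp only [Set.mem_setOf_eq, dotF, Pi.smul_apply, smul_eq_mul, mul_assoc] at *
    rw [← Finset.mul_sum, hv, mul_zero]

/-- Changemaker vector in `ℤ^m`. -/
def IsChangemaker (m : ℕ) (σ : Fin m → ℤ) : Prop :=
  Monotone σ ∧ (∀ i, 0 ≤ σ i) ∧
    ∀ k : ℤ, 0 ≤ k → k ≤ ∑ i, σ i → ∃ S : Finset (Fin m), k = ∑ i ∈ S, σ i

/-- The interval `x_a + x_{a+1} + ⋯ + x_b` in a C-type lattice of rank `n+1`. -/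
def intVec (n : ℕ) (a b : ℕ) : Fin (n + 1) → ℤ := fun i =>
  if a ≤ (i : ℕ) ∧ (i : ℕ) ≤ b then 1 else 0

/-- Breakability with respect to the C-type form. -/
def CBreakable (n : ℕ) (a : ℕ → ℤ) (ℓ : Fin (n + 1) → ℤ) : Prop :=
  ∃ x y : Fin (n + 1) → ℤ, ℓ = x + y ∧ 3 ≤ CForm n a x x ∧ 3 ≤ CForm n a y y ∧
    CForm n a x y = -1

/-- Breakability inside the lattice `(σ)^⊥ ⊆ ℤ^m`. -/
def PerpBreakable {m : ℕ} (σ : Fin m → ℤ) (ℓ : Fin m → ℤ) : Prop :=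
  ∃ x y : Fin m → ℤ, x ∈ perp σ ∧ y ∈ perp σ ∧ ℓ = x + y ∧
    3 ≤ dotF x x ∧ 3 ≤ dotF y y ∧ dotF x y = -1

/-- The number `δ([I],[J])` of dangling edges for intervals `[a,b]` and `[c,d]`,
counted with multiplicity (the edge `x_0x_1` is doubled). -/
def deltaCount (n a b c d : ℕ) : ℤ :=
  ∑ k ∈ Finset.range n,
    if (((a ≤ k ∧ k ≤ b) ∧ (c ≤ k + 1 ∧ k + 1 ≤ d)) ∨
          ((c ≤ k ∧ k ≤ d) ∧ (a ≤ k + 1 ∧ k + 1 ≤ b))) ∧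
        (¬((a ≤ k ∧ k ≤ b) ∧ (c ≤ k ∧ k ≤ d)) ∨
          ¬((a ≤ k + 1 ∧ k + 1 ≤ b) ∧ (c ≤ k + 1 ∧ k + 1 ≤ d)))
    then (if k = 0 then 2 else 1) else 0

/-- `v_j` is tight: `σ_j = 1 + σ_0 + ⋯ + σ_{j-1}`. -/
def IsTight {m : ℕ} (σ : Fin m → ℤ) (j : Fin m) : Prop :=
  σ j = 1 + ∑ i ∈ Finset.Iio j, σ i

/-- The vector `2e_0 + e_1 + ⋯ + e_{j-1} - e_j`. -/
def tightVec (m : ℕ) (j : Fin m) : Fin m → ℤ := fun i =>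
  if i = j then -1 else if i < j then (if (i : ℕ) = 0 then 2 else 1) else 0

/-- `A ⊆ {0,…,j-1}` with `σ_j = ∑_{i ∈ A} σ_i`, maximizing `∑_{i ∈ A} 2^i`. -/
def MaxSubsetRep {m : ℕ} (σ : Fin m → ℤ) (j : Fin m) (A : Finset (Fin m)) : Prop :=
  A ⊆ Finset.Iio j ∧ σ j = ∑ i ∈ A, σ i ∧
    ∀ B ⊆ Finset.Iio j, σ j = ∑ i ∈ B, σ i →
      ∑ i ∈ B, 2 ^ (i : ℕ) ≤ ∑ i ∈ A, 2 ^ (i : ℕ)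

/-- The vector `∑_{i ∈ A} e_i - e_j`. -/
def subsetVec (m : ℕ) (A : Finset (Fin m)) (j : Fin m) : Fin m → ℤ := fun i =>
  if i = j then -1 else if i ∈ A then 1 else 0

/-- `v` is the standard basis vector `v_j` of the changemaker lattice `(σ)^⊥`. -/
def IsStdBasisVec {m : ℕ} (σ : Fin m → ℤ) (j : Fin m) (v : Fin m → ℤ) : Prop :=
  (IsTight σ j ∧ v = tightVec m j) ∨
    (¬IsTight σ j ∧ ∃ A : Finset (Fin m), MaxSubsetRep σ j A ∧ v = subsetVec m A j)

/-- The subset `A` has a gappy index for `v_j`: some `i ∈ A` with `i < j - 1`, `i + 1 ∉ A`. -/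
def IsGappyAt {m : ℕ} (A : Finset (Fin m)) (j : Fin m) : Prop :=
  ∃ i ∈ A, (i : ℕ) + 1 < (j : ℕ) ∧ ∀ i' ∈ A, (i' : ℕ) ≠ (i : ℕ) + 1

/-- The reflection about `x_0^⊥` (using that `⟨x_0, v⟩` is always even and `⟨x_0,x_0⟩ = 4`). -/
def cRefl (n : ℕ) (a : ℕ → ℤ) (v : Fin (n + 1) → ℤ) : Fin (n + 1) → ℤ :=
  v - (CForm n a (Pi.single 0 1) v / 2) • Pi.single 0 1


section Aux

lemma dotF_single_left {m : ℕ} (a : Fin m) (w : Fin m → ℤ) :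
    dotF (Pi.single a (1:ℤ)) w = w a := by
  simp [dotF, Pi.single_apply, ite_mul, Finset.sum_ite_eq']

lemma dotF_single_right {m : ℕ} (a : Fin m) (v : Fin m → ℤ) :
    dotF v (Pi.single a (1:ℤ)) = v a := by
  simp [dotF, Pi.single_apply, mul_ite, Finset.sum_ite_eq']

lemma dotF_sub_left {m : ℕ} (v₁ v₂ w : Fin m → ℤ) :
    dotF (v₁ - v₂) w = dotF v₁ w - dotF v₂ w := by
  simp [dotF, sub_mul, Finset.sum_sub_distrib]

lemma dotF_sub_right {m : ℕ} (v w₁ w₂ : Fin m → ℤ) :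
    dotF v (w₁ - w₂) = dotF v w₁ - dotF v w₂ := by
  simp [dotF, mul_sub, Finset.sum_sub_distrib]

lemma dotF_smul_right {m : ℕ} (c : ℤ) (v w : Fin m → ℤ) :
    dotF v (c • w) = c * dotF v w := by
  simp [dotF, Finset.mul_sum, mul_left_comm]

lemma dotF_smul_left {m : ℕ} (c : ℤ) (v w : Fin m → ℤ) :
    dotF (c • v) w = c * dotF v w := by
  simp [dotF, Finset.mul_sum, mul_assoc]

/-- `CGram` as a function on natural number indices. -/
def gN (a : ℕ → ℤ) (i j : ℕ) : ℤ :=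
  if i = j then (if i = 0 then 4 else a i)
  else if (i = 0 ∧ j = 1) ∨ (i = 1 ∧ j = 0) then -2
  else if i + 1 = j ∨ j + 1 = i then -1
  else 0

/-- The C-type form on ℕ-indexed vectors, truncated at `m`. -/
def SForm (a : ℕ → ℤ) (U : ℕ → ℤ) (m : ℕ) : ℤ :=
  ∑ i ∈ Finset.range m, ∑ j ∈ Finset.range m, U i * gN a i j * U j

lemma cgram_eq (n : ℕ) (a : ℕ → ℤ) (i j : Fin (n+1)) :
    CGram n a i j = gN a (i : ℕ) (j : ℕ) := rfl

lemma cform_eq_sform (n : ℕ) (a : ℕ → ℤ) (v : Fin (n+1) → ℤ) :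
    CForm n a v v = SForm a (fun t => if h : t < n+1 then v ⟨t, h⟩ else 0) (n+1) := by
  set V : ℕ → ℤ := fun t => if h : t < n+1 then v ⟨t, h⟩ else 0 with hV
  have hVv : ∀ i : Fin (n+1), V (i : ℕ) = v i := by
    intro i; have hi := i.isLt; simp [hV, i.isLt]; exact fun h => absurd h (by omega)
  have h2 : SForm a V (n+1) = ∑ i : Fin (n+1), ∑ j : Fin (n+1), V ↑i * gN a ↑i ↑j * V ↑j := by
    unfold SForm
    rw [← Fin.sum_univ_eq_sum_range (fun t => ∑ j ∈ Finset.range (n+1), V t * gN a t j * V j) (n+1)]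
    apply Finset.sum_congr rfl
    intro i _
    exact (Fin.sum_univ_eq_sum_range (fun j => V ↑i * gN a ↑i j * V j) (n+1)).symm
  rw [h2]
  apply Finset.sum_congr rfl
  intro i _
  apply Finset.sum_congr rfl
  intro j _
  rw [hVv, hVv, cgram_eq]

lemma sform_two (a : ℕ → ℤ) (U : ℕ → ℤ) :
    SForm a U 2 = 4 * U 0 ^ 2 - 4 * U 0 * U 1 + a 1 * U 1 ^ 2 := by
  simp [SForm, Finset.sum_range_succ, gN]
  ring

lemma sform_succ (a : ℕ → ℤ) (U : ℕ → ℤ) (k : ℕ) :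
    SForm a U (k+3) = SForm a U (k+2) + a (k+2) * U (k+2) ^ 2 - 2 * U (k+1) * U (k+2) := by
  have hcol : ∀ i ∈ Finset.range (k+2), U i * gN a i (k+2) * U (k+2)
      = if i = k+1 then -(U i * U (k+2)) else 0 := by
    intro i hi
    rw [Finset.mem_range] at hi
    unfold gN
    rw [if_neg (show ¬ i = k+2 by omega),
      if_neg (show ¬((i = 0 ∧ k+2 = 1) ∨ (i = 1 ∧ k+2 = 0)) by omega)]
    by_cases hik : i = k+1
    · rw [if_pos (by omega), if_pos hik]; ring
    · rw [if_neg (by omega), if_neg hik]; ring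
  have hrow : ∀ j ∈ Finset.range (k+2), U (k+2) * gN a (k+2) j * U j
      = if j = k+1 then -(U j * U (k+2)) else 0 := by
    intro j hj
    rw [Finset.mem_range] at hj
    unfold gN
    rw [if_neg (show ¬ k+2 = j by omega),
      if_neg (show ¬((k+2 = 0 ∧ j = 1) ∨ (k+2 = 1 ∧ j = 0)) by omega)]
    by_cases hjk : j = k+1
    · rw [if_pos (by omega), if_pos hjk]; ring
    · rw [if_neg (by omega), if_neg hjk]; ring
  have hdiag : gN a (k+2) (k+2) = a (k+2) := by
    unfold gN; rw [if_pos rfl, if_neg (by omega)]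
  have hsplit : ∀ i ∈ Finset.range (k+2),
      (∑ j ∈ Finset.range (k+3), U i * gN a i j * U j)
      = (∑ j ∈ Finset.range (k+2), U i * gN a i j * U j)
        + (if i = k+1 then -(U i * U (k+2)) else 0) := by
    intro i hi
    rw [Finset.sum_range_succ, hcol i hi]
  unfold SForm
  rw [Finset.sum_range_succ, Finset.sum_congr rfl hsplit, Finset.sum_add_distrib,
    Finset.sum_range_succ (fun j => U (k+2) * gN a (k+2) j * U j),
    Finset.sum_congr rfl hrow,
    Finset.sum_ite_eq' (Finset.range (k+2)) (k+1) (fun i => -(U i * U (k+2))),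
    if_pos (Finset.mem_range.mpr (by omega : k+1 < k+2)), hdiag]
  ring

lemma sos (a : ℕ → ℤ) (U : ℕ → ℤ) : ∀ k : ℕ,
    SForm a U (k+2) = (2 * U 0 - U 1) ^ 2 + (a 1 - 3) * U 1 ^ 2
      + (∑ i ∈ Finset.Ico 2 (k+2), (a i - 2) * U i ^ 2)
      + U 1 ^ 2 + (∑ i ∈ Finset.Ico 1 (k+1), (U i - U (i+1)) ^ 2) + U (k+1) ^ 2 := by
  intro k
  induction k with
  | zero => rw [sform_two]; simp; ring
  | succ k ih =>
      rw [show k+1+2 = k+3 from rfl, sform_succ, ih,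
        Finset.sum_Ico_succ_top (show 2 ≤ k+2 by omega),
        Finset.sum_Ico_succ_top (show 1 ≤ k+1 by omega)]
      ring

lemma cform_single0 (k : ℕ) (a : ℕ → ℤ) (u : Fin (k+2) → ℤ) :
    CForm (k+1) a (Pi.single 0 1) u = 4 * u 0 - 2 * u 1 := by
  unfold CForm
  rw [Finset.sum_eq_single (0 : Fin (k+2))]
  · have hterm : ∀ j : Fin (k+2),
        (Pi.single (0 : Fin (k+2)) (1:ℤ) : Fin (k+2) → ℤ) 0 * CGram (k+1) a 0 j * u j
          = (if j = 0 then 4 * u j else 0) + (if j = 1 then -2 * u j else 0) := by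
      intro j
      rw [Pi.single_eq_same, one_mul]
      unfold CGram
      rcases eq_or_ne j 0 with rfl | hj0
      · simp
      · rcases eq_or_ne j 1 with rfl | hj1
        · have : ((1 : Fin (k+2)) : ℕ) = 1 := rfl
          simp [this]
        · have hv0 : (j : ℕ) ≠ 0 := fun h => hj0 (by
            apply Fin.ext; simpa using h)
          have hv1 : (j : ℕ) ≠ 1 := fun h => hj1 (by
            apply Fin.ext; simpa using h)
          have hz : ((0 : Fin (k+2)) : ℕ) = 0 := rfl
          rw [hz, if_neg (by omega), if_neg (by omega), if_neg (by omega),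
            if_neg hj0, if_neg hj1]
          ring
    rw [Finset.sum_congr rfl (fun j _ => hterm j), Finset.sum_add_distrib,
      Finset.sum_ite_eq' Finset.univ (0 : Fin (k+2)) (fun j => 4 * u j),
      Finset.sum_ite_eq' Finset.univ (1 : Fin (k+2)) (fun j => -2 * u j)]
    simp; ring
  · intro b _ hb
    simp [Pi.single_eq_of_ne hb]
  · simp

lemma single_apply_nat {m : ℕ} (b i : Fin m) :
    (Pi.single b (1:ℤ) : Fin m → ℤ) i = if (i : ℕ) = (b : ℕ) then 1 else 0 := by
  rw [Pi.single_apply]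
  by_cases h : i = b
  · rw [if_pos h, if_pos (by rw [h])]
  · rw [if_neg h, if_neg (fun hh => h (Fin.ext hh))]

lemma chain_eq (V : ℕ → ℤ) (m : ℕ) (h : ∀ i, 1 ≤ i → i < m → V i = V (i+1)) :
    ∀ j, 1 ≤ j → j ≤ m → V 1 = V j := by
  intro j
  induction j with
  | zero => omega
  | succ j ih =>
      intro _ hj
      rcases Nat.eq_zero_or_pos j with rfl | hj1
      · rfl
      · rw [ih hj1 (by omega)]
        exact h j hj1 (by omega)

lemma no_norm2 (k : ℕ) (a : ℕ → ℤ) (ha1 : 3 ≤ a 1)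
    (ha : ∀ i, 1 ≤ i → i ≤ k+1 → 2 ≤ a i) (u : Fin (k+2) → ℤ)
    (h2 : CForm (k+1) a u u = 2)
    (hpar : 4 * u 0 - 2 * u 1 = 2 ∨ 4 * u 0 - 2 * u 1 = -2) : False := by
  set V : ℕ → ℤ := fun t => if h : t < k+2 then u ⟨t, h⟩ else 0 with hVdef
  have hV0 : V 0 = u 0 := by simp [hVdef]
  have hV1 : V 1 = u 1 := by simp [hVdef]
  have hS : SForm a V (k+2) = 2 := by
    have h := cform_eq_sform (k+1) a u
    rw [h2] at h
    exact h.symm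
  rw [sos a V k] at hS
  have hd1 : 2 * V 0 - V 1 = 1 ∨ 2 * V 0 - V 1 = -1 := by rw [hV0, hV1]; omega
  have hd : (2 * V 0 - V 1) ^ 2 = 1 := by rcases hd1 with h | h <;> rw [h] <;> norm_num
  have hV1ne : V 1 ≠ 0 := by intro h; rw [h] at hd1; omega
  have hV1sq : 1 ≤ V 1 ^ 2 := by
    rcases lt_trichotomy (V 1) 0 with h | h | h
    · nlinarith
    · exact absurd h hV1ne
    · nlinarith
  have hAnn : 0 ≤ (a 1 - 3) * V 1 ^ 2 := mul_nonneg (by omega) (sq_nonneg _)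
  have hBnn : 0 ≤ ∑ i ∈ Finset.Ico 2 (k+2), (a i - 2) * V i ^ 2 := by
    apply Finset.sum_nonneg
    intro i hi
    rw [Finset.mem_Ico] at hi
    have := ha i (by omega) (by omega)
    exact mul_nonneg (by omega) (sq_nonneg _)
  have hDnn : ∀ i ∈ Finset.Ico 1 (k+1), (0:ℤ) ≤ (V i - V (i+1)) ^ 2 := fun i _ => sq_nonneg _
  have hDsum : (0:ℤ) ≤ ∑ i ∈ Finset.Ico 1 (k+1), (V i - V (i+1)) ^ 2 := Finset.sum_nonneg hDnn
  have hlastnn : (0:ℤ) ≤ V (k+1) ^ 2 := sq_nonneg _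
  rw [hd] at hS
  have hDzero : ∑ i ∈ Finset.Ico 1 (k+1), (V i - V (i+1)) ^ 2 = 0 := by linarith
  have hlz : V (k+1) ^ 2 = 0 := by linarith
  have heq := (Finset.sum_eq_zero_iff_of_nonneg hDnn).mp hDzero
  have hstep : ∀ i, 1 ≤ i → i < k+1 → V i = V (i+1) := by
    intro i hi1 hik
    have h := heq i (Finset.mem_Ico.mpr ⟨hi1, hik⟩)
    have := sq_eq_zero_iff.mp h
    omega
  have hch := chain_eq V (k+1) hstep (k+1) (by omega) le_rfl
  have hlast0 : V (k+1) = 0 := sq_eq_zero_iff.mp hlz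
  apply hV1ne
  omega

lemma tightVec_one (k : ℕ) :
    tightVec (k+3) 1 = (2:ℤ) • Pi.single 0 1 - Pi.single 1 1 := by
  funext i
  simp only [tightVec, Pi.sub_apply, Pi.smul_apply, Pi.single_apply, smul_eq_mul,
    Fin.lt_def, Fin.ext_iff, Fin.val_zero, Fin.val_one]
  split_ifs <;> omega

lemma subsetVec_one (k : ℕ) :
    subsetVec (k+3) {0} 1 = Pi.single 0 1 - Pi.single 1 1 := by
  funext i
  simp only [subsetVec, Pi.sub_apply, Pi.single_apply, Finset.mem_singleton,
    Fin.ext_iff, Fin.val_zero, Fin.val_one]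
  split_ifs <;> omega

end Aux

/-- Corollary 4.15: `v_1 = 2e_0 - e_1` if `k_1 > 1` and
`v_1 = e_0 - e_1` if `k_1 = 1`; if `x_0 = e_0 - e_{k_1} - e_{k_2} + e_{k_3}` then
necessarily `v_1 = 2e_0 - e_1`. -/
theorem statement10
    (n : ℕ) (aa : ℕ → ℤ) (hC : CTypeParams n aa)
    (σ : Fin (n + 2) → ℤ) (hσ : IsChangemaker (n + 2) σ)
    (φ : (Fin (n + 1) → ℤ) ≃ₗ[ℤ] perp σ)
    (hφ : ∀ v w : Fin (n + 1) → ℤ,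
      CForm n aa v w = dotF (φ v : Fin (n + 2) → ℤ) (φ w : Fin (n + 2) → ℤ))
    (k₁ k₂ k₃ : Fin (n + 2)) (hk₁ : 0 < k₁) (hk₁₂ : k₁ < k₂) (hk₂₃ : k₂ < k₃)
    (hx0 : (φ (Pi.single 0 1) : Fin (n + 2) → ℤ) =
        Pi.single 0 1 + Pi.single k₁ 1 + Pi.single k₂ 1 - Pi.single k₃ 1 ∨
      (φ (Pi.single 0 1) : Fin (n + 2) → ℤ) =
        Pi.single 0 1 - Pi.single k₁ 1 - Pi.single k₂ 1 + Pi.single k₃ 1)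
    (v₁ : Fin (n + 2) → ℤ) (hv₁ : IsStdBasisVec σ 1 v₁) :
    (1 < (k₁ : ℕ) → v₁ = (2 : ℤ) • Pi.single 0 1 - Pi.single 1 1) ∧
    ((k₁ : ℕ) = 1 → v₁ = Pi.single 0 1 - Pi.single 1 1) ∧
    ((φ (Pi.single 0 1) : Fin (n + 2) → ℤ) =
        Pi.single 0 1 - Pi.single k₁ 1 - Pi.single k₂ 1 + Pi.single k₃ 1 →
      v₁ = (2 : ℤ) • Pi.single 0 1 - Pi.single 1 1) := by
  obtain ⟨hn, hageq, ha1⟩ := hC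
  obtain ⟨k, rfl⟩ : ∃ k, n = k + 1 := ⟨n - 1, by omega⟩
  obtain ⟨hmono, hnn, hcm⟩ := hσ
  have hk1v : 0 < (k₁ : ℕ) := hk₁
  have hk12 : (k₁ : ℕ) < (k₂ : ℕ) := hk₁₂
  have hk23 : (k₂ : ℕ) < (k₃ : ℕ) := hk₂₃
  have hzero : ((0 : Fin (k+3)) : ℕ) = 0 := rfl
  have hone : ((1 : Fin (k+3)) : ℕ) = 1 := by simp
  set X : Fin (k+3) → ℤ := ((φ (Pi.single 0 1) : perp σ) : Fin (k+3) → ℤ) with hXdef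
  have hX0 : X 0 = 1 := by
    rcases hx0 with h | h <;> rw [h] <;>
      simp only [Pi.add_apply, Pi.sub_apply, single_apply_nat, hzero] <;>
      split_ifs <;> omega
  have main : ∀ w : Fin (k+3) → ℤ, dotF w σ = 0 →
      ∃ u : Fin (k+2) → ℤ, dotF X w = 4 * u 0 - 2 * u 1
        ∧ dotF w w = CForm (k+1) aa u u := by
    intro w hw
    have hwp : w ∈ perp σ := hw
    refine ⟨(φ.symm ⟨w, hwp⟩ : Fin (k+2) → ℤ), ?_, ?_⟩
    · have h := hφ (Pi.single 0 1) (φ.symm ⟨w, hwp⟩)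
      rw [LinearEquiv.apply_symm_apply, cform_single0] at h
      exact h.symm
    · have h := hφ (φ.symm ⟨w, hwp⟩) (φ.symm ⟨w, hwp⟩)
      rw [LinearEquiv.apply_symm_apply] at h
      exact h.symm
  have hsum_le : ∀ i : Fin (k+3), σ i ≤ ∑ j, σ j :=
    fun i => Finset.single_le_sum (fun j _ => hnn j) (Finset.mem_univ i)
  have h0le : ∀ i : Fin (k+3), σ 0 ≤ σ i := fun i => hmono (Fin.zero_le i)
  have hσ0pos : 1 ≤ σ 0 := by
    by_contra h
    have hσ00 : σ 0 = 0 := le_antisymm (by omega) (hnn 0)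
    have hmem : dotF (Pi.single (0 : Fin (k+3)) (1:ℤ)) σ = 0 := by
      rw [dotF_single_left]; exact hσ00
    obtain ⟨u, hpar, -⟩ := main _ hmem
    rw [dotF_single_right, hX0] at hpar
    omega
  have hσ0 : σ 0 = 1 := by
    by_contra h
    have h1le : (1:ℤ) ≤ ∑ i, σ i := le_trans (by omega) (hsum_le 0)
    obtain ⟨S, hS⟩ := hcm 1 (by norm_num) h1le
    rcases S.eq_empty_or_nonempty with rfl | ⟨i, hi⟩
    · simp at hS
    · have h1 : σ i ≤ ∑ j ∈ S, σ j := Finset.single_le_sum (fun j _ => hnn j) hi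
      have h2 := h0le i
      omega
  have hσ1ge : σ 0 ≤ σ 1 := h0le 1
  have hσ1le : σ 1 ≤ 2 := by
    by_contra h
    have h2le : (2:ℤ) ≤ ∑ i, σ i := le_trans (by omega) (hsum_le 1)
    obtain ⟨S, hS⟩ := hcm 2 (by norm_num) h2le
    by_cases hall : ∀ i ∈ S, i = 0
    · have hsub : S ⊆ {0} := fun i hi => Finset.mem_singleton.mpr (hall i hi)
      rcases Finset.subset_singleton_iff.mp hsub with rfl | rfl
      · simp at hS
      · rw [Finset.sum_singleton] at hS; omega
    · push_neg at hall
      obtain ⟨i, hi, hi0⟩ := hall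
      have hiv : (i : ℕ) ≠ 0 := fun hh => hi0 (Fin.ext (by rw [hh, hzero]))
      have h1i : σ 1 ≤ σ i := hmono (by rw [Fin.le_def, hone]; omega)
      have h2 := Finset.single_le_sum (fun j (_ : j ∈ S) => hnn j) hi
      omega
  have hIio : Finset.Iio (1 : Fin (k+3)) = {0} := by
    ext i
    simp only [Finset.mem_Iio, Finset.mem_singleton, Fin.lt_def, Fin.ext_iff, hzero, hone]
    omega
  have hTight : IsTight σ 1 ↔ σ 1 = 2 := by
    unfold IsTight
    rw [hIio, Finset.sum_singleton, hσ0]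
    omega
  rcases (by omega : σ 1 = 1 ∨ σ 1 = 2) with hσ1 | hσ1
  · -- σ 1 = 1 : v₁ = e₀ - e₁, and k₁ = 1, and the minus-sign case is impossible
    have hv : v₁ = Pi.single 0 1 - Pi.single 1 1 := by
      rcases hv₁ with ⟨ht, -⟩ | ⟨-, A, hA, hveq⟩
      · exact absurd (hTight.mp ht) (by omega)
      · have hA1 : A = {0} := by
          have hsub : A ⊆ {0} := by rw [← hIio]; exact hA.1
          rcases Finset.subset_singleton_iff.mp hsub with rfl | rfl
          · exfalso
            have h := hA.2.1
            simp at h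
            omega
          · rfl
        rw [hveq, hA1, subsetVec_one]
    have hwperp : dotF (Pi.single (0 : Fin (k+3)) (1:ℤ) - Pi.single 1 1) σ = 0 := by
      rw [dotF_sub_left, dotF_single_left, dotF_single_left, hσ0, hσ1]; ring
    obtain ⟨u, hpar, hnorm⟩ := main _ hwperp
    rw [dotF_sub_right, dotF_single_right, dotF_single_right, hX0] at hpar
    have hnormval : dotF (Pi.single (0 : Fin (k+3)) (1:ℤ) - Pi.single 1 1)
        (Pi.single (0 : Fin (k+3)) (1:ℤ) - Pi.single 1 1) = 2 := by
      rw [dotF_sub_right, dotF_single_right, dotF_single_right]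
      simp only [Pi.sub_apply, single_apply_nat, hzero, hone]
      norm_num
    have hk1eq : (k₁ : ℕ) = 1 := by
      by_contra hk1
      have hX1 : X 1 = 0 := by
        rcases hx0 with h | h <;> rw [h] <;>
          simp only [Pi.add_apply, Pi.sub_apply, single_apply_nat, hone] <;>
          split_ifs <;> omega
      rw [hX1] at hpar
      omega
    refine ⟨fun h => absurd h (by omega), fun _ => hv, fun hR => ?_⟩
    exfalso
    have hX1 : X 1 = -1 := by
      rw [hR]
      simp only [Pi.add_apply, Pi.sub_apply, single_apply_nat, hone]
      split_ifs <;> omega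
    rw [hX1] at hpar
    rw [hnormval] at hnorm
    exact no_norm2 k aa ha1 hageq u hnorm.symm (Or.inl (by omega))
  · -- σ 1 = 2 : v₁ = 2e₀ - e₁, and k₁ ≠ 1
    have hv : v₁ = (2:ℤ) • Pi.single 0 1 - Pi.single 1 1 := by
      rcases hv₁ with ⟨-, hveq⟩ | ⟨hnt, -⟩
      · rw [hveq, tightVec_one]
      · exact absurd (hTight.mpr hσ1) hnt
    have hwperp : dotF ((2:ℤ) • Pi.single (0 : Fin (k+3)) (1:ℤ) - Pi.single 1 1) σ = 0 := by
      rw [dotF_sub_left, dotF_smul_left, dotF_single_left, dotF_single_left, hσ0, hσ1]; ring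
    obtain ⟨u, hpar, -⟩ := main _ hwperp
    rw [dotF_sub_right, dotF_smul_right, dotF_single_right, dotF_single_right, hX0] at hpar
    refine ⟨fun _ => hv, fun hk1 => ?_, fun _ => hv⟩
    exfalso
    have hX1 : X 1 = 1 ∨ X 1 = -1 := by
      rcases hx0 with h | h <;> rw [h] <;>
        simp only [Pi.add_apply, Pi.sub_apply, single_apply_nat, hone] <;>
        split_ifs <;> omega
    rcases hX1 with h | h <;> rw [h] at hpar <;> omega

end Prism
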